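/- If A and B are m×n matrices and B̂ = Σ_{i∈S} σ_i x_i y_i^T is the truncation of the SVD of A to the set S = {i : σ_i > (1+δ)‖A−B‖}, then ‖A − B̂‖ ≤ (1+δ)·‖A − B‖. -/

import Mathlib

noncomputable def singularValues {m n : ℕ} (A : Matrix (Fin m) (Fin n) ℝ) : Fin n → ℝ :=
  fun i => Real.sqrt ((show (Matrix.transpose A * A).IsHermitian by
    simp [Matrix.IsHermitian, Matrix.transpose_mul]).eigenvalues i)

noncomputable def nuclearNorm {m n : ℕ} (A : Matrix (Fin m) (Fin n) ℝ) : ℝ :=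
  ∑ i, singularValues A i

noncomputable def frobeniusNorm {m n : ℕ} (A : Matrix (Fin m) (Fin n) ℝ) : ℝ :=
  Real.sqrt (∑ i, ∑ j, (A i j)^2)

noncomputable def matrixSpectralNorm {m n : ℕ} (A : Matrix (Fin m) (Fin n) ℝ) : ℝ :=
  ⨆ i, singularValues A i

open Matrix in
lemma spectralNorm_nonneg' {m n : ℕ} (A : Matrix (Fin m) (Fin n) ℝ) : 0 ≤ matrixSpectralNorm A :=
  Real.iSup_nonneg fun _ => Real.sqrt_nonneg _

open Matrix in
lemma dotProduct_sum' {n : ℕ} {ι : Type*} (s : Finset ι) (u : Fin n → ℝ) (f : ι → Fin n → ℝ) :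
    u ⬝ᵥ (∑ i ∈ s, f i) = ∑ i ∈ s, u ⬝ᵥ f i := by
  simp only [dotProduct, Finset.sum_apply, Finset.mul_sum]
  exact Finset.sum_comm

open Matrix in
lemma sum_dotProduct' {n : ℕ} {ι : Type*} (s : Finset ι) (u : Fin n → ℝ) (f : ι → Fin n → ℝ) :
    (∑ i ∈ s, f i) ⬝ᵥ u = ∑ i ∈ s, f i ⬝ᵥ u := by
  simp only [dotProduct, Finset.sum_apply, Finset.sum_mul]
  exact Finset.sum_comm

open Matrix in
lemma sum_mulVec' {m n : ℕ} {ι : Type*} (s : Finset ι) (f : ι → Matrix (Fin m) (Fin n) ℝ)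
    (v : Fin n → ℝ) : (∑ i ∈ s, f i) *ᵥ v = ∑ i ∈ s, f i *ᵥ v := by
  ext j
  simp only [Matrix.mulVec, dotProduct, Finset.sum_apply, Matrix.sum_apply,
    Finset.sum_mul]
  exact Finset.sum_comm

open Matrix in
lemma dotProduct_self_nonneg' {n : ℕ} (v : Fin n → ℝ) : 0 ≤ v ⬝ᵥ v :=
  Finset.sum_nonneg fun i _ => mul_self_nonneg _

open Matrix in
lemma spectralNorm_le_of_quad {m n : ℕ} (M : Matrix (Fin m) (Fin n) ℝ) (c : ℝ) (hc : 0 ≤ c)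
    (h : ∀ v : Fin n → ℝ, (M *ᵥ v) ⬝ᵥ (M *ᵥ v) ≤ c ^ 2 * (v ⬝ᵥ v)) :
    matrixSpectralNorm M ≤ c := by
  unfold matrixSpectralNorm singularValues
  refine Real.iSup_le (fun i => ?_) hc
  set hM : (Mᵀ * M).IsHermitian := (show (Matrix.transpose M * M).IsHermitian by
    simp [Matrix.IsHermitian, Matrix.transpose_mul]) with hMdef
  set v : Fin n → ℝ := ⇑(hM.eigenvectorBasis i) with hv
  have hv1 : v ⬝ᵥ v = 1 := by
    have h1 : ‖hM.eigenvectorBasis i‖ = 1 := hM.eigenvectorBasis.orthonormal.1 i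
    have h2 : (inner ℝ (hM.eigenvectorBasis i) (hM.eigenvectorBasis i) : ℝ) = 1 := by
      rw [real_inner_self_eq_norm_sq, h1]; norm_num
    rw [EuclideanSpace.inner_eq_star_dotProduct] at h2
    simpa using h2
  have heig : (Mᵀ * M) *ᵥ v = hM.eigenvalues i • v := hM.mulVec_eigenvectorBasis i
  have key : hM.eigenvalues i = (M *ᵥ v) ⬝ᵥ (M *ᵥ v) := by
    have h3 : (M *ᵥ v) ⬝ᵥ (M *ᵥ v) = v ⬝ᵥ ((Mᵀ * M) *ᵥ v) := by
      rw [← Matrix.mulVec_mulVec, dotProduct_mulVec v Mᵀ, Matrix.vecMul_transpose]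
    rw [h3, heig, dotProduct_smul, smul_eq_mul, hv1, mul_one]
  have hle : hM.eigenvalues i ≤ c ^ 2 := by
    have := h v
    rw [← key, hv1, mul_one] at this
    exact this
  calc Real.sqrt (hM.eigenvalues i) ≤ Real.sqrt (c ^ 2) := Real.sqrt_le_sqrt hle
    _ = c := by rw [Real.sqrt_sq hc]

open Matrix in
lemma vecMulVec_mulVec' {m n : ℕ} (a : Fin m → ℝ) (b : Fin n → ℝ) (v : Fin n → ℝ) :
    Matrix.vecMulVec a b *ᵥ v = (b ⬝ᵥ v) • a := by
  ext i
  simp only [Matrix.mulVec, Matrix.vecMulVec_apply, dotProduct, Pi.smul_apply,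
    smul_eq_mul, Finset.mul_sum]
  rw [Finset.sum_mul]
  exact Finset.sum_congr rfl fun j _ => by ring

open Matrix in
lemma bessel' {m n : ℕ} (y : Fin m → Fin n → ℝ)
    (hy : ∀ i j, y i ⬝ᵥ y j = if i = j then (1:ℝ) else 0) (v : Fin n → ℝ) :
    ∑ i, (y i ⬝ᵥ v) ^ 2 ≤ v ⬝ᵥ v := by
  set p : Fin m → ℝ := fun i => y i ⬝ᵥ v with hp
  set w : Fin n → ℝ := v - ∑ i, p i • y i with hw
  have h0 : (0:ℝ) ≤ w ⬝ᵥ w := dotProduct_self_nonneg' w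
  have hcross : ∀ i : Fin m, (∑ j, p j • y j) ⬝ᵥ y i = p i := by
    intro i
    rw [sum_dotProduct']
    simp only [smul_dotProduct, smul_eq_mul, hy]
    simp
  have hvy : v ⬝ᵥ (∑ i, p i • y i) = ∑ i, p i ^ 2 := by
    rw [dotProduct_sum']
    refine Finset.sum_congr rfl fun i _ => ?_
    rw [dotProduct_smul, smul_eq_mul, dotProduct_comm]
    rw [hp]; ring
  have hyv : (∑ i, p i • y i) ⬝ᵥ v = ∑ i, p i ^ 2 := by
    rw [dotProduct_comm]; exact hvy
  have hyy : (∑ i, p i • y i) ⬝ᵥ (∑ i, p i • y i) = ∑ i, p i ^ 2 := by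
    rw [dotProduct_sum']
    simp only [dotProduct_smul, smul_eq_mul, hcross]
    exact Finset.sum_congr rfl fun i _ => by ring
  have hvw : w ⬝ᵥ w = v ⬝ᵥ v - ∑ i, p i ^ 2 := by
    rw [hw, sub_dotProduct, dotProduct_sub, dotProduct_sub,
      hvy, hyv, hyy]
    ring
  rw [hvw] at h0
  linarith

open Matrix in
open scoped Classical in
theorem spectralNorm_sub_svt_le {m n : ℕ} (A B : Matrix (Fin m) (Fin n) ℝ) (δ : ℝ) (hδ : 0 < δ)
    (σ : Fin m → ℝ) (x : Fin m → Fin m → ℝ) (y : Fin m → Fin n → ℝ)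
    (hσ : ∀ i, 0 ≤ σ i)
    (hx : ∀ i j, x i ⬝ᵥ x j = if i = j then (1:ℝ) else 0)
    (hy : ∀ i j, y i ⬝ᵥ y j = if i = j then (1:ℝ) else 0)
    (hA : A = ∑ i, σ i • Matrix.vecMulVec (x i) (y i)) :
    matrixSpectralNorm
      (A - ∑ i ∈ (Finset.univ.filter fun i => (1 + δ) * matrixSpectralNorm (A - B) < σ i),
        σ i • Matrix.vecMulVec (x i) (y i))
      ≤ (1 + δ) * matrixSpectralNorm (A - B) := by
  set t : ℝ := (1 + δ) * matrixSpectralNorm (A - B) with ht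
  have ht0 : 0 ≤ t :=
    mul_nonneg (by linarith) (spectralNorm_nonneg' _)
  set S : Finset (Fin m) := Finset.univ.filter fun i => t < σ i with hS
  set T : Finset (Fin m) := Finset.univ.filter fun i => ¬ t < σ i with hT
  have hM : A - ∑ i ∈ S, σ i • Matrix.vecMulVec (x i) (y i)
      = ∑ i ∈ T, σ i • Matrix.vecMulVec (x i) (y i) := by
    rw [hA, ← Finset.sum_filter_add_sum_filter_not Finset.univ (fun i => t < σ i)]
    simp [hS, hT]
  rw [hM]
  set M := ∑ i ∈ T, σ i • Matrix.vecMulVec (x i) (y i) with hMdef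
  refine spectralNorm_le_of_quad M t ht0 fun v => ?_
  have hMv : M *ᵥ v = ∑ i ∈ T, (σ i * (y i ⬝ᵥ v)) • x i := by
    rw [hMdef, sum_mulVec']
    refine Finset.sum_congr rfl fun i _ => ?_
    rw [Matrix.smul_mulVec, vecMulVec_mulVec', smul_smul]
  have hdot : (M *ᵥ v) ⬝ᵥ (M *ᵥ v) = ∑ i ∈ T, (σ i * (y i ⬝ᵥ v)) ^ 2 := by
    rw [hMv, sum_dotProduct']
    refine Finset.sum_congr rfl fun i hi => ?_
    rw [dotProduct_sum']
    simp only [smul_dotProduct, dotProduct_smul, smul_eq_mul, hx]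
    rw [Finset.sum_eq_single i]
    · simp [pow_two]; try ring
    · intro b _ hb
      simp [Ne.symm hb]
    · intro hni; exact absurd hi (by simpa using hni)
  rw [hdot]
  have hbound : ∑ i ∈ T, (σ i * (y i ⬝ᵥ v)) ^ 2 ≤ t ^ 2 * ∑ i ∈ T, (y i ⬝ᵥ v) ^ 2 := by
    rw [Finset.mul_sum]
    refine Finset.sum_le_sum fun i hi => ?_
    have hσi : σ i ≤ t := by
      simp only [hT, Finset.mem_filter] at hi
      exact le_of_not_gt hi.2
    have : (σ i * (y i ⬝ᵥ v)) ^ 2 = σ i ^ 2 * (y i ⬝ᵥ v) ^ 2 := by ring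
    rw [this]
    exact mul_le_mul_of_nonneg_right (pow_le_pow_left₀ (hσ i) hσi 2) (sq_nonneg _)
  have hb2 : ∑ i ∈ T, (y i ⬝ᵥ v) ^ 2 ≤ v ⬝ᵥ v := by
    calc ∑ i ∈ T, (y i ⬝ᵥ v) ^ 2 ≤ ∑ i, (y i ⬝ᵥ v) ^ 2 :=
          Finset.sum_le_sum_of_subset_of_nonneg (Finset.subset_univ T)
            (fun i _ _ => sq_nonneg _)
      _ ≤ v ⬝ᵥ v := bessel' y hy v
  calc ∑ i ∈ T, (σ i * (y i ⬝ᵥ v)) ^ 2 ≤ t ^ 2 * ∑ i ∈ T, (y i ⬝ᵥ v) ^ 2 := hbound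
    _ ≤ t ^ 2 * (v ⬝ᵥ v) := mul_le_mul_of_nonneg_left hb2 (sq_nonneg _)
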